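/- arXiv:1601.01305 — 3 statements merged into one kernel-verified Lean document; each statement's English description precedes it below -/
import Mathlib

section
/- Characteristic equation for the positive eigenvalues in the diagonal case: let A = diag(a₁,a₂,a₃) be a diagonal real 3×3 matrix and let m̃ ∈ ℝ³ be a unit vector. Then for every λ ∈ ℝ, det(𝓜(A,m̃) − λI) = −λ·(λ² − 4π²λ[(a₂+a₃)m̃₁² + (a₁+a₃)m̃₂² + (a₁+a₂)m̃₃²] + 16π⁴[a₂a₃m̃₁² + a₁a₃m̃₂² + a₁a₂m̃₃²]). In particular, the nonzero eigenvalues λ of 𝓜(A,m̃) are precisely the roots of the quadratic λ² − 4π²λ[(a₂+a₃)m̃₁² + (a₁+a₃)m̃₂² + (a₁+a₂)m̃₃²] + 16π⁴[a₂a₃m̃₁² + a₁a₃m̃₂² + a₁a₂m̃₃²] = 0. -/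
open Matrix Real

/-- The Fourier symbol matrix `𝓜(A,m)` with entries
`𝓜(A,m)_{lp} = 4π² (e_l × m) · A (e_p × m)`. -/
noncomputable def symbolM (A : Matrix (Fin 3) (Fin 3) ℝ) (m : Fin 3 → ℝ) :
    Matrix (Fin 3) (Fin 3) ℝ :=
  Matrix.of fun l p =>
    4 * π ^ 2 *
      (crossProduct (Pi.single l 1) m ⬝ᵥ A.mulVec (crossProduct (Pi.single p 1) m))

theorem characteristic_equation_diagonal (a₁ a₂ a₃ : ℝ) (m : Fin 3 → ℝ)
    (hm : m ⬝ᵥ m = 1) :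
    (∀ lam : ℝ,
      (symbolM (Matrix.diagonal ![a₁, a₂, a₃]) m - lam • (1 : Matrix (Fin 3) (Fin 3) ℝ)).det =
        -lam * (lam ^ 2
          - 4 * π ^ 2 * lam *
              ((a₂ + a₃) * (m 0) ^ 2 + (a₁ + a₃) * (m 1) ^ 2 + (a₁ + a₂) * (m 2) ^ 2)
          + 16 * π ^ 4 *
              (a₂ * a₃ * (m 0) ^ 2 + a₁ * a₃ * (m 1) ^ 2 + a₁ * a₂ * (m 2) ^ 2))) ∧
    (∀ lam : ℝ, lam ≠ 0 →
      ((symbolM (Matrix.diagonal ![a₁, a₂, a₃]) m - lam • (1 : Matrix (Fin 3) (Fin 3) ℝ)).det = 0 ↔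
        lam ^ 2
          - 4 * π ^ 2 * lam *
              ((a₂ + a₃) * (m 0) ^ 2 + (a₁ + a₃) * (m 1) ^ 2 + (a₁ + a₂) * (m 2) ^ 2)
          + 16 * π ^ 4 *
              (a₂ * a₃ * (m 0) ^ 2 + a₁ * a₃ * (m 1) ^ 2 + a₁ * a₂ * (m 2) ^ 2) = 0)) := by
  have key : ∀ lam : ℝ,
      (symbolM (Matrix.diagonal ![a₁, a₂, a₃]) m - lam • (1 : Matrix (Fin 3) (Fin 3) ℝ)).det =
        -lam * (lam ^ 2
          - 4 * π ^ 2 * lam *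
              ((a₂ + a₃) * (m 0) ^ 2 + (a₁ + a₃) * (m 1) ^ 2 + (a₁ + a₂) * (m 2) ^ 2)
          + 16 * π ^ 4 *
              (a₂ * a₃ * (m 0) ^ 2 + a₁ * a₃ * (m 1) ^ 2 + a₁ * a₂ * (m 2) ^ 2)) := by
    intro lam
    have hm' : m 0 ^ 2 + m 1 ^ 2 + m 2 ^ 2 = 1 := by
      have := hm
      simp [dotProduct, Fin.sum_univ_three] at this
      nlinarith [this]
    rw [Matrix.det_fin_three]
    simp [symbolM, crossProduct, Matrix.sub_apply, Matrix.smul_apply, Matrix.one_apply,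
      Matrix.mulVec, dotProduct, Fin.sum_univ_three, Matrix.diagonal, Pi.single_apply]
    linear_combination (-16*π^4*lam*(a₂*a₃*m 0^2 + a₁*a₃*m 1^2 + a₁*a₂*m 2^2)) * hm'
  refine ⟨key, fun lam hlam => ?_⟩
  rw [key lam]
  constructor
  · intro h
    rcases mul_eq_zero.mp h with h1 | h2
    · exact absurd (neg_eq_zero.mp h1) hlam
    · exact h2
  · intro h; rw [h, mul_zero]
end

section
/- Directional case, characteristic polynomial: let A = diag(a,b,b) with a,b ∈ ℝ and let m̃ ∈ ℝ³ be a unit vector with first component m̃₁. Then for every λ ∈ ℝ, det(λI − 𝓜(A,m̃)) = λ · (λ − 4π²b) · (λ − 4π²(a(1 − m̃₁²) + b m̃₁²)); that is, the eigenvalues of 𝓜(A,m̃) are 0, 4π²b and 4π²(a(1−m̃₁²)+bm̃₁²). -/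
open Matrix Real

set_option maxHeartbeats 1000000 in
theorem charpoly_directional (a b : ℝ) (m : Fin 3 → ℝ) (hm : m ⬝ᵥ m = 1) (lam : ℝ) :
    (lam • (1 : Matrix (Fin 3) (Fin 3) ℝ) - symbolM (Matrix.diagonal ![a, b, b]) m).det =
      lam * (lam - 4 * π ^ 2 * b) *
        (lam - 4 * π ^ 2 * (a * (1 - (m 0) ^ 2) + b * (m 0) ^ 2)) := by
  have h : m 0 ^ 2 + m 1 ^ 2 + m 2 ^ 2 = 1 := by
    simpa [dotProduct, Fin.sum_univ_three, sq] using hm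
  have key : symbolM (Matrix.diagonal ![a, b, b]) m =
      !![4*π^2*(b*(m 2)^2 + b*(m 1)^2), 4*π^2*(-(b*(m 0)*(m 1))), 4*π^2*(-(b*(m 0)*(m 2)));
         4*π^2*(-(b*(m 0)*(m 1))), 4*π^2*(a*(m 2)^2 + b*(m 0)^2), 4*π^2*(-(a*(m 1)*(m 2)));
         4*π^2*(-(b*(m 0)*(m 2))), 4*π^2*(-(a*(m 1)*(m 2))), 4*π^2*(a*(m 1)^2 + b*(m 0)^2)] := by
    ext l p
    fin_cases l <;> fin_cases p <;>
      · simp [symbolM, crossProduct, Matrix.mulVec, dotProduct, Matrix.diagonal,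
          Fin.sum_univ_three]
        ring
  rw [key]
  simp [Matrix.det_fin_three, Matrix.smul_apply, Matrix.one_apply]
  linear_combination (lam * b ^ 2 * (4 * π ^ 2) ^ 2 * m 0 ^ 2
    + lam * a * b * (4 * π ^ 2) ^ 2 * (1 + m 1 ^ 2 + m 2 ^ 2)
    - lam ^ 2 * b * (4 * π ^ 2) - lam ^ 2 * a * (4 * π ^ 2)) * h
end

section
/- Directional case, second eigenvector: let A = diag(a,b,b) with a,b ∈ ℝ and let m̃ ∈ ℝ³ be a unit vector. Then 𝓜(A,m̃)((e₁ × m̃) × m̃) = 4π² b ((e₁ × m̃) × m̃); i.e. (e₁ × m̃) × m̃ is an eigenvector of 𝓜(A,m̃) with eigenvalue 4π²b. -/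
open Matrix Real

theorem second_eigenvector_directional (a b : ℝ) (m : Fin 3 → ℝ) (hm : m ⬝ᵥ m = 1) :
    (symbolM (Matrix.diagonal ![a, b, b]) m).mulVec
        (crossProduct (crossProduct (Pi.single 0 1) m) m) =
      (4 * π ^ 2 * b) • crossProduct (crossProduct (Pi.single 0 1) m) m := by
  have h : m 0 ^ 2 + m 1 ^ 2 + m 2 ^ 2 = 1 := by
    simpa [dotProduct, Fin.sum_univ_three, sq] using hm
  have hc : crossProduct (crossProduct (Pi.single 0 1) m) m =
      ![-(m 1 ^ 2) - m 2 ^ 2, m 0 * m 1, m 0 * m 2] := by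
    funext i
    fin_cases i <;> simp [crossProduct, Pi.single_apply] <;> ring
  rw [hc]
  funext i
  fin_cases i <;>
    simp [symbolM, mulVec, dotProduct, crossProduct, Fin.sum_univ_three,
      Matrix.diagonal, Pi.single_apply]
  · linear_combination (-(4 * π ^ 2 * b * (m 1 ^ 2 + m 2 ^ 2))) * h
  · linear_combination (4 * π ^ 2 * b * m 0 * m 1) * h
  · linear_combination (4 * π ^ 2 * b * m 0 * m 2) * h
end
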